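/- Consider sequences defined by x_{i,k+1} = x_{i,k} + φ_{i,k+1}(G_{i,k} - x_{i,k}), y_{i,k+1} = y_{i,k} + φ_{i,k+1}(x_{i,k} - y_{i,k}), u_{k+1} = (Σ_i φ_{i,k+1})(u_k + (1/n)Σ_i φ_{i,k+1}(x_{i,k} - y_{i,k})) + φ_{s,k+1}·0, x_{s,k+1} = x_{s,k} + φ_{s,k+1}u_k, where at each step exactly one of φ_{1,k+1},…,φ_{n,k+1},φ_{s,k+1} equals 1 and the rest are 0, and initially u_0 = 0 and y_{i,0} = x_{s,0} for all i. Then for every k, x_{s,k} + u_k = (1/n)Σ_{i=1}^n y_{i,k}, i.e., the quantity z̄_k = x_{s,k} + u_k - ȳ_k is invariantly zero. -/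

import Mathlib

open Finset

/-- Conservation law of the AREA iterates: the aggregator satisfies
x_s + u = ȳ at every iteration. -/
theorem area_conservation {d n : ℕ} (hn : 0 < n)
    (x y : Fin n → ℕ → EuclideanSpace ℝ (Fin d))
    (G : Fin n → ℕ → EuclideanSpace ℝ (Fin d))
    (u xs : ℕ → EuclideanSpace ℝ (Fin d))
    (φ : Fin n → ℕ → ℝ) (φs : ℕ → ℝ)
    (hφ01 : ∀ i k, φ i k = 0 ∨ φ i k = 1)
    (hφs01 : ∀ k, φs k = 0 ∨ φs k = 1)
    (hone : ∀ k, (∑ i, φ i k) + φs k = 1)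
    (hx : ∀ i k, x i (k + 1) = x i k + φ i (k + 1) • (G i k - x i k))
    (hy : ∀ i k, y i (k + 1) = y i k + φ i (k + 1) • (x i k - y i k))
    (hu : ∀ k, u (k + 1) =
      (∑ i, φ i (k + 1)) • (u k + ((1 : ℝ) / (n : ℝ)) • ∑ i, φ i (k + 1) • (x i k - y i k)))
    (hxs : ∀ k, xs (k + 1) = xs k + φs (k + 1) • u k)
    (hu0 : u 0 = 0)
    (hy0 : ∀ i, y i 0 = xs 0) :
    ∀ k, xs k + u k = ((1 : ℝ) / (n : ℝ)) • ∑ i, y i k := by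
  have hn' : (n : ℝ) ≠ 0 := Nat.cast_ne_zero.mpr hn.ne'
  intro k
  induction k with
  | zero =>
    have : (∑ i, y i 0) = (n : ℝ) • xs 0 := by
      simp [hy0, Finset.sum_const, card_univ, ← Nat.cast_smul_eq_nsmul ℝ]
    rw [hu0, add_zero, this, smul_smul]
    rw [one_div, inv_mul_cancel₀ hn', one_smul]
  | succ k ih =>
    rcases hφs01 (k + 1) with h0 | h1
    · have hsum : (∑ i, φ i (k + 1)) = 1 := by have := hone (k + 1); linarith
      have hysum : ∑ i, y i (k + 1)
          = (∑ i, y i k) + ∑ i, φ i (k + 1) • (x i k - y i k) := by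
        rw [← Finset.sum_add_distrib]
        exact Finset.sum_congr rfl fun i _ => hy i k
      rw [hxs, hu, hsum, h0, one_smul, zero_smul, add_zero, hysum, smul_add, ← ih]
      abel
    · have hsum : (∑ i, φ i (k + 1)) = 0 := by have := hone (k + 1); linarith
      have hz : ∀ i ∈ Finset.univ, φ i (k + 1) = 0 := by
        rw [← Finset.sum_eq_zero_iff_of_nonneg]
        · exact hsum
        · intro i _
          rcases hφ01 i (k + 1) with h | h <;> rw [h] <;> norm_num
      have hys : ∑ i, y i (k + 1) = ∑ i, y i k := by
        refine Finset.sum_congr rfl fun i hi => ?_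
        rw [hy, hz i hi, zero_smul, add_zero]
      rw [hxs, hu, hsum, zero_smul, h1, one_smul, hys, ← ih]
      abel
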